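/- If θ̂ interpolates the training data (Xθ̂ = y) then the empirical adversarial risk satisfies R^adv(θ̂; δ) = (1/n)∑ᵢ(|yᵢ - xᵢᵀθ̂| + δ‖θ̂‖_*)² = δ²‖θ̂‖_*², and consequently √(R^adv_*(θ̂; δ_test)) - √(R_*(θ̂)) ≤ (δ_test/δ̄)·√(R^adv(θ̂; δ̄)) for any δ_test > 0 and δ̄ > 0, where R^adv_* and R_* are the population adversarial and standard risks. -/

import Mathlib

open Matrix MeasureTheory

/-- The dual norm `‖θ‖_* = sup_{‖x‖ ≤ 1} |θᵀx|` of a norm `N` on `ℝ^p`. -/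
noncomputable def dualNorm {p : ℕ} (N : (Fin p → ℝ) → ℝ) (θ : Fin p → ℝ) : ℝ :=
  sSup {v | ∃ x : Fin p → ℝ, N x ≤ 1 ∧ v = |θ ⬝ᵥ x|}

/-- The adversarial training risk `(1/n) ∑ᵢ (|yᵢ - xᵢᵀθ| + δ‖θ‖_*)²`. -/
noncomputable def advRisk {n p : ℕ} (N : (Fin p → ℝ) → ℝ)
    (X : Matrix (Fin n) (Fin p) ℝ) (y : Fin n → ℝ) (δ : ℝ) (θ : Fin p → ℝ) : ℝ :=
  (1 / n : ℝ) * ∑ i, (|y i - X i ⬝ᵥ θ| + δ * dualNorm N θ) ^ 2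

/-- Type synonym for `Fin p → ℝ` to carry a custom norm. -/
def DualAux (p : ℕ) : Type := Fin p → ℝ

instance {p : ℕ} : AddCommGroup (DualAux p) := Pi.addCommGroup
noncomputable instance {p : ℕ} : Module ℝ (DualAux p) := Pi.module _ _ _
instance {p : ℕ} : FiniteDimensional ℝ (DualAux p) :=
  inferInstanceAs (FiniteDimensional ℝ (Fin p → ℝ))

lemma dual_bound {p : ℕ} (N : (Fin p → ℝ) → ℝ)
    (hN_eq : ∀ v, N v = 0 ↔ v = 0)
    (hN_smul : ∀ (a : ℝ) v, N (a • v) = |a| * N v)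
    (hN_add : ∀ v w, N (v + w) ≤ N v + N w)
    (θ : Fin p → ℝ) : ∃ C, 0 ≤ C ∧ ∀ x, |θ ⬝ᵥ x| ≤ C * N x := by
  classical
  letI G : NormedAddCommGroup (DualAux p) := AddGroupNorm.toNormedAddCommGroup
    { toFun := fun v => N (show Fin p → ℝ from v)
      map_zero' := (hN_eq 0).mpr rfl
      neg' := fun v => by
        have h := hN_smul (-1) (show Fin p → ℝ from v)
        rw [neg_one_smul, abs_neg, abs_one, one_mul] at h
        exact h
      add_le' := fun v w => hN_add (show Fin p → ℝ from v) (show Fin p → ℝ from w)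
      eq_zero_of_map_eq_zero' := fun v h => (hN_eq (show Fin p → ℝ from v)).mp h }
  letI S : NormedSpace ℝ (DualAux p) :=
    ⟨fun a v => le_of_eq (hN_smul a (show Fin p → ℝ from v))⟩
  let f : (DualAux p) →ₗ[ℝ] ℝ :=
    { toFun := fun x => θ ⬝ᵥ (show Fin p → ℝ from x)
      map_add' := fun a b => dotProduct_add θ a b
      map_smul' := fun a b => dotProduct_smul a θ b }
  let g : (DualAux p) →L[ℝ] ℝ := LinearMap.toContinuousLinearMap f
  refine ⟨‖g‖, norm_nonneg g, fun x => ?_⟩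
  have h := g.le_opNorm (show DualAux p from x)
  have hx : ‖(show DualAux p from x)‖ = N x := rfl
  rw [hx] at h
  simpa [g, f] using h

theorem stmt9 {n p : ℕ} (hn : 0 < n) (N : (Fin p → ℝ) → ℝ)
    (hN_eq : ∀ v, N v = 0 ↔ v = 0)
    (hN_smul : ∀ (a : ℝ) v, N (a • v) = |a| * N v)
    (hN_add : ∀ v w, N (v + w) ≤ N v + N w)
    (X : Matrix (Fin n) (Fin p) ℝ) (y : Fin n → ℝ)
    (θh : Fin p → ℝ) (hinterp : X *ᵥ θh = y)
    (δtest δbar : ℝ) (hδtest : 0 < δtest) (hδbar : 0 < δbar)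
    {Ω : Type*} [MeasurableSpace Ω] (μ : Measure Ω) [IsProbabilityMeasure μ]
    (x0 : Ω → Fin p → ℝ) (y0 : Ω → ℝ)
    (hg : Integrable (fun ω => (y0 ω - x0 ω ⬝ᵥ θh) ^ 2) μ)
    (hg1 : Integrable (fun ω => |y0 ω - x0 ω ⬝ᵥ θh|) μ)
    (hf : Integrable (fun ω =>
      sSup {v | ∃ Δx : Fin p → ℝ, N Δx ≤ δtest ∧ v = (y0 ω - (x0 ω + Δx) ⬝ᵥ θh) ^ 2}) μ) :
    advRisk N X y δbar θh = δbar ^ 2 * dualNorm N θh ^ 2 ∧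
    Real.sqrt (∫ ω,
        sSup {v | ∃ Δx : Fin p → ℝ, N Δx ≤ δtest ∧ v = (y0 ω - (x0 ω + Δx) ⬝ᵥ θh) ^ 2} ∂μ) -
      Real.sqrt (∫ ω, (y0 ω - x0 ω ⬝ᵥ θh) ^ 2 ∂μ) ≤
      (δtest / δbar) * Real.sqrt (advRisk N X y δbar θh) := by
  classical
  set D := dualNorm N θh with hD
  set e : Ω → ℝ := fun ω => y0 ω - x0 ω ⬝ᵥ θh with he
  -- nonnegativity of N
  have hN0 : N 0 = 0 := (hN_eq 0).mpr rfl
  have hNn : ∀ v, 0 ≤ N v := by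
    intro v
    have h1 : N (v + (-1 : ℝ) • v) ≤ N v + N ((-1 : ℝ) • v) := hN_add _ _
    have h2 : N ((-1 : ℝ) • v) = N v := by rw [hN_smul]; simp
    have h3 : v + (-1 : ℝ) • v = 0 := by simp
    rw [h3, hN0, h2] at h1
    linarith
  obtain ⟨C, hC0, hC⟩ := dual_bound N hN_eq hN_smul hN_add θh
  -- the dual norm set is bounded above and contains 0
  have hbdd : BddAbove {v | ∃ x : Fin p → ℝ, N x ≤ 1 ∧ v = |θh ⬝ᵥ x|} := by
    refine ⟨C, fun v hv => ?_⟩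
    obtain ⟨x, hx1, rfl⟩ := hv
    calc |θh ⬝ᵥ x| ≤ C * N x := hC x
      _ ≤ C * 1 := by exact mul_le_mul_of_nonneg_left hx1 hC0
      _ = C := mul_one C
  have hmem0 : (0 : ℝ) ∈ {v | ∃ x : Fin p → ℝ, N x ≤ 1 ∧ v = |θh ⬝ᵥ x|} :=
    ⟨0, by simp [hN0], by simp⟩
  have hD0 : 0 ≤ D := le_csSup hbdd hmem0
  -- key bound: perturbations of size δtest contribute at most δtest * D
  have hkey : ∀ x : Fin p → ℝ, N x ≤ δtest → |x ⬝ᵥ θh| ≤ δtest * D := by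
    intro x hx
    have hu : N (δtest⁻¹ • x) ≤ 1 := by
      rw [hN_smul, abs_of_pos (inv_pos.mpr hδtest)]
      rw [inv_mul_le_iff₀ hδtest, mul_one]
      exact hx
    have hmem : |θh ⬝ᵥ (δtest⁻¹ • x)| ∈ {v | ∃ z : Fin p → ℝ, N z ≤ 1 ∧ v = |θh ⬝ᵥ z|} :=
      ⟨_, hu, rfl⟩
    have h1 : |θh ⬝ᵥ (δtest⁻¹ • x)| ≤ D := le_csSup hbdd hmem
    have h2 : θh ⬝ᵥ (δtest⁻¹ • x) = δtest⁻¹ * (θh ⬝ᵥ x) := by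
      rw [dotProduct_smul]; rfl
    rw [h2, abs_mul, abs_of_pos (inv_pos.mpr hδtest)] at h1
    rw [dotProduct_comm]
    calc |θh ⬝ᵥ x| = δtest * (δtest⁻¹ * |θh ⬝ᵥ x|) := by field_simp
      _ ≤ δtest * D := mul_le_mul_of_nonneg_left h1 (le_of_lt hδtest)
  -- Part 1
  have hzero : ∀ i, y i - X i ⬝ᵥ θh = 0 := by
    intro i
    have : (X *ᵥ θh) i = y i := by rw [hinterp]
    simp [Matrix.mulVec, dotProduct] at this ⊢
    rw [this]; ring
  have hpart1 : advRisk N X y δbar θh = δbar ^ 2 * D ^ 2 := by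
    unfold advRisk
    have : ∀ i : Fin n, (|y i - X i ⬝ᵥ θh| + δbar * dualNorm N θh) ^ 2
        = (δbar * D) ^ 2 := by
      intro i; rw [hzero i, abs_zero, zero_add, ← hD]
    rw [Finset.sum_congr rfl (fun i _ => this i), Finset.sum_const, Finset.card_univ,
      Fintype.card_fin]
    have hn' : (n : ℝ) ≠ 0 := Nat.cast_ne_zero.mpr hn.ne'
    field_simp
    ring
  refine ⟨hpart1, ?_⟩
  -- Part 2
  set c := δtest * D with hc
  have hc0 : 0 ≤ c := mul_nonneg hδtest.le hD0
  -- pointwise bound on the adversarial sup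
  have hptwise : ∀ ω, sSup {v | ∃ Δx : Fin p → ℝ, N Δx ≤ δtest ∧
      v = (y0 ω - (x0 ω + Δx) ⬝ᵥ θh) ^ 2} ≤ (|e ω| + c) ^ 2 := by
    intro ω
    apply Real.sSup_le
    · rintro v ⟨Δx, hΔx, rfl⟩
      have h1 : (x0 ω + Δx) ⬝ᵥ θh = x0 ω ⬝ᵥ θh + Δx ⬝ᵥ θh := add_dotProduct _ _ _
      have h2 : |y0 ω - (x0 ω + Δx) ⬝ᵥ θh| ≤ |e ω| + c := by
        rw [h1]
        calc |y0 ω - (x0 ω ⬝ᵥ θh + Δx ⬝ᵥ θh)| = |e ω - Δx ⬝ᵥ θh| := by rw [he]; ring_nf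
          _ ≤ |e ω| + |Δx ⬝ᵥ θh| := abs_sub _ _
          _ ≤ |e ω| + c := by linarith [hkey Δx hΔx]
      calc (y0 ω - (x0 ω + Δx) ⬝ᵥ θh) ^ 2 = |y0 ω - (x0 ω + Δx) ⬝ᵥ θh| ^ 2 := (sq_abs _).symm
        _ ≤ (|e ω| + c) ^ 2 := by
            apply pow_le_pow_left₀ (abs_nonneg _) h2
    · positivity
  -- integrability of the majorant
  have hexp : (fun ω => (|e ω| + c) ^ 2)
      = fun ω => ((e ω) ^ 2 + (2 * c) * |e ω|) + c ^ 2 := by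
    funext ω; rw [add_sq, sq_abs]; ring
  have hInt2 : Integrable (fun ω => (|e ω| + c) ^ 2) μ := by
    rw [hexp]; exact (hg.add (hg1.const_mul _)).add (integrable_const _)
  have hle1 : (∫ ω, sSup {v | ∃ Δx : Fin p → ℝ, N Δx ≤ δtest ∧
      v = (y0 ω - (x0 ω + Δx) ⬝ᵥ θh) ^ 2} ∂μ) ≤ ∫ ω, (|e ω| + c) ^ 2 ∂μ :=
    integral_mono hf hInt2 hptwise
  have hg' : Integrable (fun ω => (e ω) ^ 2) μ := hg
  have hg1' : Integrable (fun ω => |e ω|) μ := hg1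
  have hIeq : (∫ ω, (|e ω| + c) ^ 2 ∂μ)
      = (∫ ω, (e ω) ^ 2 ∂μ) + (2 * c) * (∫ ω, |e ω| ∂μ) + c ^ 2 := by
    have hB : Integrable (fun ω => 2 * c * |e ω|) μ := hg1'.const_mul (2 * c)
    have hA : Integrable (fun ω => e ω ^ 2 + 2 * c * |e ω|) μ := hg'.add hB
    rw [hexp, integral_add hA (integrable_const _),
      integral_add hg' hB, integral_const, integral_const_mul]
    simp
  -- Cauchy–Schwarz: ∫|e| ≤ √(∫ e²)
  have hInt_sq_nonneg : 0 ≤ ∫ ω, (e ω) ^ 2 ∂μ := integral_nonneg fun ω => sq_nonneg _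
  have hml : MemLp (fun ω => |e ω|) 2 μ := by
    rw [memLp_two_iff_integrable_sq hg1.aestronglyMeasurable]
    simpa [sq_abs] using hg
  have hvar := ProbabilityTheory.variance_nonneg (fun ω => |e ω|) μ
  rw [ProbabilityTheory.variance_eq_sub hml] at hvar
  have hvar' : (∫ ω, |e ω| ∂μ) ^ 2 ≤ ∫ ω, (e ω) ^ 2 ∂μ := by
    have : (∫ ω, ((fun ω => |e ω|) ^ 2) ω ∂μ) = ∫ ω, (e ω) ^ 2 ∂μ := by
      congr 1; funext ω; simp [sq_abs]
    rw [this] at hvar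
    linarith
  have hCS : (∫ ω, |e ω| ∂μ) ≤ Real.sqrt (∫ ω, (e ω) ^ 2 ∂μ) := by
    have h0 : 0 ≤ ∫ ω, |e ω| ∂μ := integral_nonneg fun ω => abs_nonneg _
    exact (Real.le_sqrt h0 hInt_sq_nonneg).mpr hvar'
  -- chain of square roots
  have hchain : Real.sqrt (∫ ω, sSup {v | ∃ Δx : Fin p → ℝ, N Δx ≤ δtest ∧
      v = (y0 ω - (x0 ω + Δx) ⬝ᵥ θh) ^ 2} ∂μ)
      ≤ Real.sqrt (∫ ω, (e ω) ^ 2 ∂μ) + c := by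
    have h1 : (∫ ω, sSup {v | ∃ Δx : Fin p → ℝ, N Δx ≤ δtest ∧
        v = (y0 ω - (x0 ω + Δx) ⬝ᵥ θh) ^ 2} ∂μ)
        ≤ (Real.sqrt (∫ ω, (e ω) ^ 2 ∂μ) + c) ^ 2 := by
      rw [add_sq, Real.sq_sqrt hInt_sq_nonneg]
      calc _ ≤ (∫ ω, (e ω) ^ 2 ∂μ) + (2 * c) * (∫ ω, |e ω| ∂μ) + c ^ 2 := by
            rw [← hIeq]; exact hle1
        _ ≤ _ := by nlinarith [hCS]
    calc Real.sqrt _ ≤ Real.sqrt ((Real.sqrt (∫ ω, (e ω) ^ 2 ∂μ) + c) ^ 2) :=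
          Real.sqrt_le_sqrt h1
      _ = Real.sqrt (∫ ω, (e ω) ^ 2 ∂μ) + c :=
          Real.sqrt_sq (by positivity)
  -- conclude
  have hRHS : (δtest / δbar) * Real.sqrt (advRisk N X y δbar θh) = c := by
    rw [hpart1]
    have : δbar ^ 2 * D ^ 2 = (δbar * D) ^ 2 := by ring
    rw [this, Real.sqrt_sq (mul_nonneg hδbar.le hD0), hc]
    field_simp
  rw [hRHS]
  linarith [hchain]
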